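/- (Ehrenfeucht–Fraïssé game for ELU.) For any finite vocabulary τ, any τ-structures 𝔄, 𝔅 with a ∈ dom(𝔄), b ∈ dom(𝔅), and any natural number ℓ: 𝔄,a ≤^ℓ_ELU 𝔅,b if and only if 𝔄,a ⪯^ℓ_sim 𝔅,b. Consequently, 𝔄,a ≤_ELU 𝔅,b if and only if 𝔄,a ⪯^ℓ_sim 𝔅,b for all ℓ. Moreover, if 𝔄 and 𝔅 are finite, then 𝔄,a ≤_ELU 𝔅,b if and only if 𝔄,a ⪯_sim 𝔅,b. -/

import Mathlib

/-- A τ-structure over domain `D`, for a vocabulary with concept names `Con`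
(unary predicates) and role names `Rol` (binary predicates). -/
structure Str (Con Rol : Type) (D : Type) where
  conI : Con → Set D
  rolI : Rol → Set (D × D)

/-- ALC-concepts over the vocabulary `(Con, Rol)`. -/
inductive ALC (Con Rol : Type) where
  | top : ALC Con Rol
  | bot : ALC Con Rol
  | atomic : Con → ALC Con Rol
  | neg : ALC Con Rol → ALC Con Rol
  | disj : ALC Con Rol → ALC Con Rol → ALC Con Rol
  | conj : ALC Con Rol → ALC Con Rol → ALC Con Rol
  | impl : ALC Con Rol → ALC Con Rol → ALC Con Rol
  | ex : Rol → ALC Con Rol → ALC Con Rol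
  | all : Rol → ALC Con Rol → ALC Con Rol

variable {Con Rol D D1 D2 : Type}

/-- The extension `C^𝔄` of an ALC-concept in a structure. -/
def ALC.sem (M : Str Con Rol D) : ALC Con Rol → Set D
  | .top => Set.univ
  | .bot => ∅
  | .atomic A => M.conI A
  | .neg C => (C.sem M)ᶜ
  | .disj C C' => C.sem M ∪ C'.sem M
  | .conj C C' => C.sem M ∩ C'.sem M
  | .impl C C' => (C.sem M)ᶜ ∪ C'.sem M
  | .ex R C => {a | ∃ b, (a, b) ∈ M.rolI R ∧ b ∈ C.sem M}
  | .all R C => {a | ∀ b, (a, b) ∈ M.rolI R → b ∈ C.sem M}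

/-- The depth of an ALC-concept: maximal nesting of `∃R` and `∀R`. -/
def ALC.depth : ALC Con Rol → ℕ
  | .top | .bot | .atomic _ => 0
  | .neg C => C.depth
  | .disj C C' | .conj C C' | .impl C C' => max C.depth C'.depth
  | .ex _ C | .all _ C => C.depth + 1

/-- ELU-concepts: built from concept names and ⊤ using ⊓, ⊔ and ∃R only. -/
inductive ALC.IsELU : ALC Con Rol → Prop
  | top : IsELU .top
  | atomic (A : Con) : IsELU (.atomic A)
  | conj {C C' : ALC Con Rol} : IsELU C → IsELU C' → IsELU (.conj C C')
  | disj {C C' : ALC Con Rol} : IsELU C → IsELU C' → IsELU (.disj C C')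
  | ex (R : Rol) {C : ALC Con Rol} : IsELU C → IsELU (.ex R C)

/-- hornALC-concepts: `H ::= ⊥ | ⊤ | A | H⊓H' | L→H | ∃R.H | ∀R.H` with `L` an ELU-concept. -/
inductive ALC.IsHorn : ALC Con Rol → Prop
  | bot : IsHorn .bot
  | top : IsHorn .top
  | atomic (A : Con) : IsHorn (.atomic A)
  | conj {H H' : ALC Con Rol} : IsHorn H → IsHorn H' → IsHorn (.conj H H')
  | impl {L H : ALC Con Rol} : IsELU L → IsHorn H → IsHorn (.impl L H)
  | ex (R : Rol) {H : ALC Con Rol} : IsHorn H → IsHorn (.ex R H)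
  | all (R : Rol) {H : ALC Con Rol} : IsHorn H → IsHorn (.all R H)

/-- `S` is a simulation between `M` and `N`. -/
def IsSim (M : Str Con Rol D1) (N : Str Con Rol D2) (S : Set (D1 × D2)) : Prop :=
  ∀ a b, (a, b) ∈ S →
    (∀ A, a ∈ M.conI A → b ∈ N.conI A) ∧
    (∀ R a', (a, a') ∈ M.rolI R → ∃ b', (b, b') ∈ N.rolI R ∧ (a', b') ∈ S)

/-- `𝔄,a ⪯_sim 𝔅,b`: some simulation contains `(a,b)`. -/
def Sim (M : Str Con Rol D1) (N : Str Con Rol D2) (a : D1) (b : D2) : Prop :=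
  ∃ S, IsSim M N S ∧ (a, b) ∈ S

/-- The ℓ-round simulation relations `⪯^ℓ_sim`. -/
def SimL (M : Str Con Rol D1) (N : Str Con Rol D2) : ℕ → D1 → D2 → Prop
  | 0 => fun a b => ∀ A, a ∈ M.conI A → b ∈ N.conI A
  | ℓ + 1 => fun a b =>
      (∀ A, a ∈ M.conI A → b ∈ N.conI A) ∧
      ∀ R a', (a, a') ∈ M.rolI R → ∃ b', (b, b') ∈ N.rolI R ∧ SimL M N ℓ a' b'

/-- `X R↑ Y`. -/
def relUp (R : Set (D1 × D1)) (X Y : Set D1) : Prop := ∀ a ∈ X, ∃ b ∈ Y, (a, b) ∈ R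

/-- `X R↓ Y`. -/
def relDown (R : Set (D1 × D1)) (X Y : Set D1) : Prop := ∀ b ∈ Y, ∃ a ∈ X, (a, b) ∈ R

/-- `Z` is a Horn simulation between `M` and `N`. -/
def IsHornSim (M : Str Con Rol D1) (N : Str Con Rol D2) (Z : Set (Set D1 × D2)) : Prop :=
  ∀ X b, (X, b) ∈ Z →
    X.Nonempty ∧
    (∀ A, X ⊆ M.conI A → b ∈ N.conI A) ∧
    (∀ R Y, relUp (M.rolI R) X Y →
        ∃ Y', Y' ⊆ Y ∧ ∃ b', (b, b') ∈ N.rolI R ∧ (Y', b') ∈ Z) ∧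
    (∀ R b', (b, b') ∈ N.rolI R → ∃ Y, relDown (M.rolI R) X Y ∧ (Y, b') ∈ Z) ∧
    (∀ a ∈ X, Sim N M b a)

/-- `𝔄,X ⪯_horn 𝔅,b`: some Horn simulation contains `(X,b)`. -/
def HornSim (M : Str Con Rol D1) (N : Str Con Rol D2) (X : Set D1) (b : D2) : Prop :=
  ∃ Z, IsHornSim M N Z ∧ (X, b) ∈ Z

/-- The ℓ-round Horn simulation relations `⪯^ℓ_horn`. -/
def HornSimL (M : Str Con Rol D1) (N : Str Con Rol D2) : ℕ → Set D1 → D2 → Prop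
  | 0 => fun X b =>
      X.Nonempty ∧ (∀ A, X ⊆ M.conI A → b ∈ N.conI A) ∧ ∀ a ∈ X, SimL N M 0 b a
  | ℓ + 1 => fun X b =>
      (X.Nonempty ∧ (∀ A, X ⊆ M.conI A → b ∈ N.conI A) ∧ ∀ a ∈ X, SimL N M 0 b a) ∧
      (∀ R Y, relUp (M.rolI R) X Y →
          ∃ Y', Y' ⊆ Y ∧ ∃ b', (b, b') ∈ N.rolI R ∧ HornSimL M N ℓ Y' b') ∧
      (∀ R b', (b, b') ∈ N.rolI R → ∃ Y, relDown (M.rolI R) X Y ∧ HornSimL M N ℓ Y b') ∧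
      (∀ a ∈ X, SimL N M (ℓ + 1) b a)

/-- `𝔄,X ≤^ℓ_hornALC 𝔅,b`. -/
def leHornDepth (M : Str Con Rol D1) (N : Str Con Rol D2) (ℓ : ℕ) (X : Set D1) (b : D2) : Prop :=
  ∀ C : ALC Con Rol, C.IsHorn → C.depth ≤ ℓ → X ⊆ C.sem M → b ∈ C.sem N

/-- `𝔄,X ≤_hornALC 𝔅,b`. -/
def leHorn (M : Str Con Rol D1) (N : Str Con Rol D2) (X : Set D1) (b : D2) : Prop :=
  ∀ C : ALC Con Rol, C.IsHorn → X ⊆ C.sem M → b ∈ C.sem N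

/-- `𝔄,a ≤^ℓ_ELU 𝔅,b`. -/
def leELUDepth (M : Str Con Rol D1) (N : Str Con Rol D2) (ℓ : ℕ) (a : D1) (b : D2) : Prop :=
  ∀ C : ALC Con Rol, C.IsELU → C.depth ≤ ℓ → a ∈ C.sem M → b ∈ C.sem N

/-- `𝔄,a ≤_ELU 𝔅,b`. -/
def leELU (M : Str Con Rol D1) (N : Str Con Rol D2) (a : D1) (b : D2) : Prop :=
  ∀ C : ALC Con Rol, C.IsELU → a ∈ C.sem M → b ∈ C.sem N

section EFAux

open Classical

/-- Big conjunction of a list of concepts. -/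
def bigConj : List (ALC Con Rol) → ALC Con Rol
  | [] => .top
  | C :: L => .conj C (bigConj L)

lemma bigConj_sem (M : Str Con Rol D) (x : D) :
    ∀ L : List (ALC Con Rol), x ∈ (bigConj L).sem M ↔ ∀ C ∈ L, x ∈ C.sem M
  | [] => by simp [bigConj, ALC.sem]
  | C :: L => by
    simp only [bigConj, ALC.sem, Set.mem_inter_iff, bigConj_sem M x L, List.mem_cons]
    constructor
    · rintro ⟨h1, h2⟩ C' (rfl | hC') ; exact h1; exact h2 _ hC'
    · intro h; exact ⟨h _ (Or.inl rfl), fun C' hC' => h _ (Or.inr hC')⟩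

lemma bigConj_isELU : ∀ {L : List (ALC Con Rol)}, (∀ C ∈ L, C.IsELU) → (bigConj L).IsELU
  | [], _ => ALC.IsELU.top
  | C :: L, h => ALC.IsELU.conj (h _ List.mem_cons_self)
      (bigConj_isELU fun C' hC' => h _ (List.mem_cons_of_mem _ hC'))

lemma bigConj_depth : ∀ {L : List (ALC Con Rol)} {n : ℕ},
    (∀ C ∈ L, C.depth ≤ n) → (bigConj L).depth ≤ n
  | [], n, _ => by simp [bigConj, ALC.depth]
  | C :: L, n, h => by
    simp only [bigConj, ALC.depth, max_le_iff]
    exact ⟨h _ List.mem_cons_self,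
      bigConj_depth fun C' hC' => h _ (List.mem_cons_of_mem _ hC')⟩

/-- The atoms satisfied at `a`. -/
noncomputable def atomsOf [Fintype Con] (M : Str Con Rol D1) (a : D1) : Finset Con :=
  Finset.univ.filter fun A => a ∈ M.conI A

/-- Build a concept from a set of atoms and a set of role-successor concepts. -/
noncomputable def mkC (s : Finset Con) (t : Finset (Rol × ALC Con Rol)) : ALC Con Rol :=
  .conj (bigConj (s.toList.map .atomic)) (bigConj (t.toList.map fun p => .ex p.1 p.2))

lemma mkC_sem (N : Str Con Rol D2) (s : Finset Con) (t : Finset (Rol × ALC Con Rol)) (x : D2) :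
    x ∈ (mkC s t).sem N ↔
      (∀ A ∈ s, x ∈ N.conI A) ∧
      ∀ p ∈ t, ∃ y, (x, y) ∈ N.rolI p.1 ∧ y ∈ p.2.sem N := by
  simp only [mkC, ALC.sem, Set.mem_inter_iff, bigConj_sem, List.mem_map, Finset.mem_toList]
  constructor
  · rintro ⟨h1, h2⟩
    refine ⟨fun A hA => h1 _ ⟨A, hA, rfl⟩, fun p hp => ?_⟩
    have := h2 _ ⟨p, hp, rfl⟩
    simpa [ALC.sem] using this
  · rintro ⟨h1, h2⟩
    constructor
    · rintro C ⟨A, hA, rfl⟩; exact h1 A hA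
    · rintro C ⟨p, hp, rfl⟩
      simpa [ALC.sem] using h2 p hp

lemma mkC_isELU {s : Finset Con} {t : Finset (Rol × ALC Con Rol)}
    (h : ∀ p ∈ t, (p.2 : ALC Con Rol).IsELU) : (mkC s t).IsELU := by
  refine ALC.IsELU.conj (bigConj_isELU ?_) (bigConj_isELU ?_)
  · intro C hC; rw [List.mem_map] at hC; obtain ⟨A, _, rfl⟩ := hC; exact ALC.IsELU.atomic A
  · intro C hC; rw [List.mem_map] at hC; obtain ⟨p, hp, rfl⟩ := hC
    exact ALC.IsELU.ex _ (h p (Finset.mem_toList.1 hp))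

lemma mkC_depth {s : Finset Con} {t : Finset (Rol × ALC Con Rol)} {n : ℕ}
    (h : ∀ p ∈ t, (p.2 : ALC Con Rol).depth ≤ n) : (mkC s t).depth ≤ n + 1 := by
  simp only [mkC, ALC.depth, max_le_iff]
  constructor
  · refine le_trans (bigConj_depth (n := 0) ?_) (Nat.zero_le _)
    intro C hC; rw [List.mem_map] at hC; obtain ⟨A, _, rfl⟩ := hC; simp [ALC.depth]
  · refine bigConj_depth ?_
    intro C hC; rw [List.mem_map] at hC; obtain ⟨p, hp, rfl⟩ := hC
    simpa [ALC.depth] using h p (Finset.mem_toList.1 hp)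

lemma mkC_depth_empty {s : Finset Con} {n : ℕ} :
    (mkC s (∅ : Finset (Rol × ALC Con Rol))).depth ≤ n := by
  simp only [mkC, ALC.depth, max_le_iff]
  constructor
  · refine le_trans (bigConj_depth (n := 0) ?_) (Nat.zero_le _)
    intro C hC; rw [List.mem_map] at hC; obtain ⟨A, _, rfl⟩ := hC; simp [ALC.depth]
  · refine le_trans (bigConj_depth (n := 0) ?_) (Nat.zero_le _)
    intro C hC; rw [List.mem_map] at hC; obtain ⟨p, hp, rfl⟩ := hC
    simp at hp

/-- The successor data of `a` through a function with finite range. -/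
noncomputable def succFin [Finite Rol] (M : Str Con Rol D1) (f : D1 → ALC Con Rol)
    (hf : (Set.range f).Finite) (a : D1) : Finset (Rol × ALC Con Rol) :=
  Set.Finite.toFinset
    (s := {p : Rol × ALC Con Rol | ∃ a', (a, a') ∈ M.rolI p.1 ∧ p.2 = f a'})
    (Set.Finite.subset (Set.finite_univ.prod hf)
      (by rintro ⟨R, C⟩ ⟨a', h1, rfl⟩; exact ⟨trivial, Set.mem_range_self a'⟩))

lemma mem_succFin [Finite Rol] (M : Str Con Rol D1) (f : D1 → ALC Con Rol)
    (hf : (Set.range f).Finite) (a : D1) (R : Rol) (C : ALC Con Rol) :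
    (R, C) ∈ succFin M f hf a ↔ ∃ a', (a, a') ∈ M.rolI R ∧ C = f a' := by
  simp [succFin, Set.Finite.mem_toFinset]

/-- Characteristic concepts of depth `ℓ`, as a function with finite range. -/
noncomputable def chiAux [Fintype Con] [Fintype Rol] (M : Str Con Rol D1) :
    ℕ → { f : D1 → ALC Con Rol // (Set.range f).Finite }
  | 0 => ⟨fun a => mkC (atomsOf M a) ∅,
      Set.Finite.subset
        (Set.finite_range fun s : Finset Con => mkC s (∅ : Finset (Rol × ALC Con Rol)))
        (by rintro _ ⟨a, rfl⟩; exact ⟨atomsOf M a, rfl⟩)⟩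
  | (ℓ+1) =>
      ⟨fun a => mkC (atomsOf M a) (succFin M (chiAux M ℓ).1 (chiAux M ℓ).2 a), by
        have h2 : ((Set.univ : Set Rol) ×ˢ Set.range (chiAux M ℓ).1).Finite :=
          Set.finite_univ.prod (chiAux M ℓ).2
        have hsubs : {t : Finset (Rol × ALC Con Rol) |
            (↑t : Set (Rol × ALC Con Rol)) ⊆ (Set.univ : Set Rol) ×ˢ Set.range (chiAux M ℓ).1}.Finite := by
          have := h2.finite_subsets
          exact Set.Finite.preimage (Finset.coe_injective.injOn) this
        refine Set.Finite.subset
          (Set.Finite.image (fun q : Finset Con × Finset (Rol × ALC Con Rol) => mkC q.1 q.2)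
            ((Set.finite_univ (α := Finset Con)).prod hsubs)) ?_
        rintro _ ⟨a, rfl⟩
        refine ⟨(atomsOf M a, succFin M (chiAux M ℓ).1 (chiAux M ℓ).2 a), ⟨trivial, ?_⟩, rfl⟩
        intro p hp
        simp only [Finset.mem_coe] at hp
        rcases p with ⟨R, C⟩
        rw [mem_succFin] at hp
        obtain ⟨a', _, rfl⟩ := hp
        exact ⟨trivial, Set.mem_range_self a'⟩⟩

/-- The characteristic concept. -/
noncomputable def chi [Fintype Con] [Fintype Rol] (M : Str Con Rol D1) (ℓ : ℕ) (a : D1) :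
    ALC Con Rol := (chiAux M ℓ).1 a

lemma chi_zero [Fintype Con] [Fintype Rol] (M : Str Con Rol D1) (a : D1) :
    chi M 0 a = mkC (atomsOf M a) ∅ := rfl

lemma chi_succ [Fintype Con] [Fintype Rol] (M : Str Con Rol D1) (ℓ : ℕ) (a : D1) :
    chi M (ℓ+1) a = mkC (atomsOf M a) (succFin M (chiAux M ℓ).1 (chiAux M ℓ).2 a) := rfl

lemma chi_isELU [Fintype Con] [Fintype Rol] (M : Str Con Rol D1) :
    ∀ (ℓ : ℕ) (a : D1), (chi M ℓ a).IsELU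
  | 0, a => by rw [chi_zero]; exact mkC_isELU (by simp)
  | (ℓ+1), a => by
    rw [chi_succ]
    refine mkC_isELU ?_
    rintro ⟨R, C⟩ hp
    rw [mem_succFin] at hp
    obtain ⟨a', _, rfl⟩ := hp
    exact chi_isELU M ℓ a'

lemma chi_depth [Fintype Con] [Fintype Rol] (M : Str Con Rol D1) :
    ∀ (ℓ : ℕ) (a : D1), (chi M ℓ a).depth ≤ ℓ
  | 0, a => by rw [chi_zero]; exact mkC_depth_empty
  | (ℓ+1), a => by
    rw [chi_succ]
    refine mkC_depth ?_
    rintro ⟨R, C⟩ hp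
    rw [mem_succFin] at hp
    obtain ⟨a', _, rfl⟩ := hp
    exact chi_depth M ℓ a'

lemma chi_self [Fintype Con] [Fintype Rol] (M : Str Con Rol D1) :
    ∀ (ℓ : ℕ) (a : D1), a ∈ (chi M ℓ a).sem M
  | 0, a => by
    rw [chi_zero, mkC_sem]
    refine ⟨fun A hA => ?_, by simp⟩
    simpa [atomsOf] using hA
  | (ℓ+1), a => by
    rw [chi_succ, mkC_sem]
    refine ⟨fun A hA => by simpa [atomsOf] using hA, ?_⟩
    rintro ⟨R, C⟩ hp
    rw [mem_succFin] at hp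
    obtain ⟨a', h1, rfl⟩ := hp
    exact ⟨a', h1, chi_self M ℓ a'⟩

lemma chi_complete [Fintype Con] [Fintype Rol] (M : Str Con Rol D1) (N : Str Con Rol D2) :
    ∀ (ℓ : ℕ) (a : D1) (b : D2), b ∈ (chi M ℓ a).sem N → SimL M N ℓ a b
  | 0, a, b => by
    rw [chi_zero, mkC_sem]
    rintro ⟨h1, _⟩
    intro A hA
    exact h1 A (by simp [atomsOf, hA])
  | (ℓ+1), a, b => by
    rw [chi_succ, mkC_sem]
    rintro ⟨h1, h2⟩
    refine ⟨fun A hA => h1 A (by simp [atomsOf, hA]), ?_⟩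
    intro R a' ha'
    obtain ⟨b', hb1, hb2⟩ := h2 (R, chi M ℓ a')
      ((mem_succFin _ _ _ _ _ _).2 ⟨a', ha', rfl⟩)
    exact ⟨b', hb1, chi_complete M N ℓ a' b' hb2⟩

lemma simL_atoms {M : Str Con Rol D1} {N : Str Con Rol D2} {ℓ : ℕ} {a : D1} {b : D2}
    (h : SimL M N ℓ a b) : ∀ A, a ∈ M.conI A → b ∈ N.conI A := by
  cases ℓ with
  | zero => exact h
  | succ ℓ => exact h.1

lemma simL_sound {M : Str Con Rol D1} {N : Str Con Rol D2} {C : ALC Con Rol}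
    (hC : C.IsELU) : ∀ (ℓ : ℕ) (a : D1) (b : D2),
    SimL M N ℓ a b → C.depth ≤ ℓ → a ∈ C.sem M → b ∈ C.sem N := by
  induction hC with
  | top => intro ℓ a b _ _ _; simp [ALC.sem]
  | atomic A => intro ℓ a b h _ ha; exact simL_atoms h A ha
  | conj h1 h2 ih1 ih2 =>
    intro ℓ a b h hd ha
    simp only [ALC.depth, max_le_iff] at hd
    exact ⟨ih1 ℓ a b h hd.1 ha.1, ih2 ℓ a b h hd.2 ha.2⟩
  | disj h1 h2 ih1 ih2 =>
    intro ℓ a b h hd ha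
    simp only [ALC.depth, max_le_iff] at hd
    rcases ha with ha | ha
    · exact Or.inl (ih1 ℓ a b h hd.1 ha)
    · exact Or.inr (ih2 ℓ a b h hd.2 ha)
  | ex R h ih =>
    intro ℓ a b hs hd ha
    obtain ⟨a', ha1, ha2⟩ := ha
    cases ℓ with
    | zero => simp [ALC.depth] at hd
    | succ ℓ =>
      obtain ⟨b', hb1, hb2⟩ := hs.2 R a' ha1
      exact ⟨b', hb1, ih ℓ a' b' hb2 (by simpa [ALC.depth] using hd) ha2⟩

lemma simL_succ {M : Str Con Rol D1} {N : Str Con Rol D2} :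
    ∀ (ℓ : ℕ) (a : D1) (b : D2), SimL M N (ℓ+1) a b → SimL M N ℓ a b
  | 0, a, b, h => h.1
  | (ℓ+1), a, b, h => by
    refine ⟨h.1, fun R a' ha' => ?_⟩
    obtain ⟨b', hb1, hb2⟩ := h.2 R a' ha'
    exact ⟨b', hb1, simL_succ ℓ a' b' hb2⟩

lemma simL_anti {M : Str Con Rol D1} {N : Str Con Rol D2} {ℓ ℓ' : ℕ} (hle : ℓ ≤ ℓ')
    {a : D1} {b : D2} (h : SimL M N ℓ' a b) : SimL M N ℓ a b := by
  induction hle with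
  | refl => exact h
  | step h' ih => exact ih (simL_succ _ _ _ h)

lemma sim_simL {M : Str Con Rol D1} {N : Str Con Rol D2} {S : Set (D1 × D2)}
    (hS : IsSim M N S) : ∀ (ℓ : ℕ) (a : D1) (b : D2), (a, b) ∈ S → SimL M N ℓ a b
  | 0, a, b, hab => (hS a b hab).1
  | (ℓ+1), a, b, hab => by
    refine ⟨(hS a b hab).1, fun R a' ha' => ?_⟩
    obtain ⟨b', hb1, hb2⟩ := (hS a b hab).2 R a' ha'
    exact ⟨b', hb1, sim_simL hS ℓ a' b' hb2⟩

end EFAux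

/-- **Ehrenfeucht–Fraïssé game for ELU.**
For any finite vocabulary τ, pointed τ-structures `𝔄,a` and `𝔅,b`, and any `ℓ < ω`:
`𝔄,a ≤^ℓ_ELU 𝔅,b` iff `𝔄,a ⪯^ℓ_sim 𝔅,b`.  Thus `𝔄,a ≤_ELU 𝔅,b` iff
`𝔄,a ⪯^ℓ_sim 𝔅,b` for all `ℓ`.  If `𝔄` and `𝔅` are finite, then
`𝔄,a ≤_ELU 𝔅,b` iff `𝔄,a ⪯_sim 𝔅,b`. -/
theorem elu_ef_game {Con Rol : Type} [Fintype Con] [Fintype Rol]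
    {D1 D2 : Type} [Nonempty D1] [Nonempty D2]
    (M : Str Con Rol D1) (N : Str Con Rol D2) (a : D1) (b : D2) :
    (∀ ℓ : ℕ, leELUDepth M N ℓ a b ↔ SimL M N ℓ a b) ∧
    (leELU M N a b ↔ ∀ ℓ : ℕ, SimL M N ℓ a b) ∧
    (Finite D1 → Finite D2 → (leELU M N a b ↔ Sim M N a b)) := by
  have h1 : ∀ ℓ : ℕ, leELUDepth M N ℓ a b ↔ SimL M N ℓ a b := by
    intro ℓ
    constructor
    · intro h
      exact chi_complete M N ℓ a b
        (h (chi M ℓ a) (chi_isELU M ℓ a) (chi_depth M ℓ a) (chi_self M ℓ a))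
    · intro h C hC hd ha
      exact simL_sound hC ℓ a b h hd ha
  have h2 : leELU M N a b ↔ ∀ ℓ : ℕ, SimL M N ℓ a b := by
    constructor
    · intro h ℓ
      exact (h1 ℓ).1 fun C hC _ ha => h C hC ha
    · intro h C hC ha
      exact ((h1 C.depth).2 (h C.depth)) C hC le_rfl ha
  refine ⟨h1, h2, fun hD1 hD2 => ?_⟩
  rw [h2]
  constructor
  · intro h
    refine ⟨{p : D1 × D2 | ∀ ℓ : ℕ, SimL M N ℓ p.1 p.2}, ?_, h⟩
    intro x y hxy
    refine ⟨fun A hA => simL_atoms (hxy 0) A hA, fun R x' hx' => ?_⟩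
    by_contra hcon
    push_neg at hcon
    have hcon' : ∀ y' : D2, ∃ ℓ : ℕ, (y, y') ∈ N.rolI R → ¬ SimL M N ℓ x' y' := by
      intro y'
      by_cases hy : (y, y') ∈ N.rolI R
      · obtain ⟨ℓ, hℓ⟩ : ∃ ℓ, ¬ SimL M N ℓ x' y' := by
          by_contra hc; push_neg at hc; exact hcon y' hy hc
        exact ⟨ℓ, fun _ => hℓ⟩
      · exact ⟨0, fun h' => absurd h' hy⟩
    choose g hg using hcon'
    haveI := Fintype.ofFinite D2
    set L := Finset.univ.sup g with hL
    obtain ⟨y', hy1, hy2⟩ := (hxy (L + 1)).2 R x' hx'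
    exact hg y' hy1 (simL_anti (Finset.le_sup (Finset.mem_univ y')) hy2)
  · rintro ⟨S, hS, hab⟩ ℓ
    exact sim_simL hS ℓ a b hab
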